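/- arXiv:1904.11432 — 5 statements merged into one kernel-verified Lean document; each statement's English description precedes it below -/
import Mathlib

section
/- For a biased random walk on the integers that increases by 1 with probability p and decreases by 1 with probability q = 1 - p, where 0 < q < p < 1, the probability that a walk started at z ≥ 0 ever reaches -1 equals (q/p)^(z+1). -/
/-- `hitProb p q t z` is the probability that the biased random walk on `ℤ`
(step `+1` with probability `p`, step `-1` with probability `q`) started at `z`
reaches `-1` within `t` steps. The probability of ever reaching `-1` is the
limit of these finite-horizon probabilities as `t → ∞`. -/
noncomputable def hitProb (p q : ℝ) : ℕ → ℤ → ℝ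
  | 0, z => if z < 0 then 1 else 0
  | t + 1, z => if z < 0 then 1 else q * hitProb p q t (z - 1) + p * hitProb p q t (z + 1)

lemma hitProb_nonneg {p q : ℝ} (hp : 0 ≤ p) (hq : 0 ≤ q) :
    ∀ t z, 0 ≤ hitProb p q t z := by
  intro t
  induction t with
  | zero => intro z; rw [hitProb]; split <;> norm_num
  | succ t ih =>
      intro z; rw [hitProb]; split
      · norm_num
      · exact add_nonneg (mul_nonneg hq (ih _)) (mul_nonneg hp (ih _))

lemma hitProb_neg {p q : ℝ} {z : ℤ} (hz : z < 0) (t : ℕ) : hitProb p q t z = 1 := by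
  cases t <;> rw [hitProb] <;> simp [hz]

/-- key identity: `(q/p)^(z+1)` is harmonic for the walk. -/
lemma key_id {p q : ℝ} (hq : 0 < q) (hqp : q < p) (hpq : q = 1 - p) (z : ℤ) :
    q * (q / p) ^ z + p * (q / p) ^ (z + 2) = (q / p) ^ (z + 1) := by
  have hp0 : 0 < p := hq.trans hqp
  have hr0 : q / p ≠ 0 := by positivity
  rw [zpow_add₀ hr0 z 2, zpow_add₀ hr0 z 1, zpow_one]
  have key : q + p * ((q / p) ^ (2 : ℤ)) = q / p := by
    rw [zpow_two]
    field_simp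
    rw [hpq]; ring
  linear_combination ((q / p) ^ z) * key

lemma hitProb_le {p q : ℝ} (hq : 0 < q) (hqp : q < p) (hp : p < 1) (hpq : q = 1 - p) :
    ∀ t z, hitProb p q t z ≤ (q / p) ^ (z + 1) := by
  have hp0 : 0 < q / p := div_pos hq (hq.trans hqp)
  have hr1 : q / p < 1 := (div_lt_one (hq.trans hqp)).2 hqp
  intro t
  induction t with
  | zero =>
      intro z; rw [hitProb]; split
      · exact one_le_zpow_of_nonpos₀ hp0 hr1.le (by omega)
      · positivity
  | succ t ih =>
      intro z; rw [hitProb]; split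
      · exact one_le_zpow_of_nonpos₀ hp0 hr1.le (by omega)
      · calc q * hitProb p q t (z - 1) + p * hitProb p q t (z + 1)
            ≤ q * (q / p) ^ (z - 1 + 1) + p * (q / p) ^ (z + 1 + 1) :=
              add_le_add (mul_le_mul_of_nonneg_left (ih _) hq.le)
                (mul_le_mul_of_nonneg_left (ih _) (hq.trans hqp).le)
          _ = q * (q / p) ^ z + p * (q / p) ^ (z + 2) := by
              rw [show z - 1 + 1 = z from by ring, show z + 1 + 1 = z + 2 from by ring]
          _ = (q / p) ^ (z + 1) := key_id hq hqp hpq z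

lemma hitProb_mono {p q : ℝ} (hp : 0 ≤ p) (hq : 0 ≤ q) :
    ∀ t z, hitProb p q t z ≤ hitProb p q (t + 1) z := by
  intro t
  induction t with
  | zero =>
      intro z
      rw [hitProb, hitProb]
      split
      · exact le_refl _
      · exact add_nonneg (mul_nonneg hq (hitProb_nonneg hp hq _ _))
          (mul_nonneg hp (hitProb_nonneg hp hq _ _))
  | succ t ih =>
      intro z
      rw [show hitProb p q (t + 1) z = if z < 0 then 1 else
            q * hitProb p q t (z - 1) + p * hitProb p q t (z + 1) from rfl,
          show hitProb p q (t + 1 + 1) z = if z < 0 then 1 else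
            q * hitProb p q (t + 1) (z - 1) + p * hitProb p q (t + 1) (z + 1) from rfl]
      split
      · exact le_refl _
      · exact add_le_add (mul_le_mul_of_nonneg_left (ih _) hq)
          (mul_le_mul_of_nonneg_left (ih _) hp)

/-- For a biased random walk that increases by 1 with probability `p` and decreases by
1 with probability `q = 1 - p`, where `0 < q < p < 1`, the probability that a walk
started at `z ≥ 0` ever reaches `-1` equals `(q/p)^(z+1)`. -/
theorem gambler_ruin_hitting_probability (p q : ℝ) (hq : 0 < q) (hqp : q < p) (hp : p < 1)
    (hpq : q = 1 - p) (z : ℤ) (hz : 0 ≤ z) :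
    Filter.Tendsto (fun t => hitProb p q t z) Filter.atTop (nhds ((q / p) ^ (z + 1))) := by
  have hp0 : 0 < p := hq.trans hqp
  set r : ℝ := q / p with hr
  have hr0 : 0 < r := div_pos hq hp0
  have hr1 : r < 1 := (div_lt_one hp0).2 hqp
  have hpr : p * r = q := by rw [hr]; field_simp
  -- the limit function
  set L : ℤ → ℝ := fun w => ⨆ t, hitProb p q t w with hL
  have hbdd : ∀ w : ℤ, BddAbove (Set.range fun t => hitProb p q t w) := by
    intro w
    exact ⟨r ^ (w + 1), by rintro x ⟨t, rfl⟩; exact hitProb_le hq hqp hp hpq t w⟩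
  have hmono : ∀ w : ℤ, Monotone fun t => hitProb p q t w := by
    intro w
    exact monotone_nat_of_le_succ fun t => hitProb_mono hp0.le hq.le t w
  have hT : ∀ w : ℤ, Filter.Tendsto (fun t => hitProb p q t w) Filter.atTop (nhds (L w)) :=
    fun w => tendsto_atTop_ciSup (hmono w) (hbdd w)
  have hL1 : ∀ w : ℤ, w < 0 → L w = 1 := by
    intro w hw
    have h : (fun t => hitProb p q t w) = fun _ : ℕ => (1 : ℝ) := by
      funext t; exact hitProb_neg hw t
    simp only [hL, h]
    exact ciSup_const
  have hLle : ∀ w : ℤ, L w ≤ r ^ (w + 1) := fun w =>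
    ciSup_le fun t => hitProb_le hq hqp hp hpq t w
  have hL0 : ∀ w : ℤ, 0 ≤ L w := fun w =>
    (hitProb_nonneg hp0.le hq.le 0 w).trans (le_ciSup (hbdd w) 0)
  have hrec : ∀ w : ℤ, 0 ≤ w → L w = q * L (w - 1) + p * L (w + 1) := by
    intro w hw
    have h1 : Filter.Tendsto (fun t => hitProb p q (t + 1) w) Filter.atTop (nhds (L w)) :=
      (hT w).comp (Filter.tendsto_add_atTop_nat 1)
    have h2 : (fun t => hitProb p q (t + 1) w)
        = fun t => q * hitProb p q t (w - 1) + p * hitProb p q t (w + 1) := by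
      funext t
      rw [hitProb, if_neg (by omega)]
    rw [h2] at h1
    exact tendsto_nhds_unique h1
      (((hT (w - 1)).const_mul q).add ((hT (w + 1)).const_mul p))
  -- the defect
  set D : ℤ → ℝ := fun w => r ^ (w + 1) - L w with hD
  have hD0 : ∀ w : ℤ, 0 ≤ D w := fun w => sub_nonneg.2 (hLle w)
  have hDm : ∀ w : ℤ, D w = r ^ (w + 1) - L w := fun w => rfl
  have hDrec : ∀ w : ℤ, 0 ≤ w → D w = q * D (w - 1) + p * D (w + 1) := by
    intro w hw
    have k := key_id hq hqp hpq w
    rw [← hr] at k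
    have h := hrec w hw
    rw [hDm w, hDm (w - 1), hDm (w + 1),
        show w - 1 + 1 = w from by ring, show w + 1 + 1 = w + 2 from by ring]
    linear_combination -k - h
  have hDneg : D (-1) = 0 := by
    rw [hDm, hL1 (-1) (by norm_num)]
    norm_num
  clear_value D L r
  -- solve the recurrence
  have claim : ∀ n : ℕ, D n * (1 - r) = D 0 * (1 - r ^ ((n : ℤ) + 1)) ∧
      D ((n : ℤ) + 1) * (1 - r) = D 0 * (1 - r ^ ((n : ℤ) + 2)) := by
    intro n
    induction n with
    | zero =>
        have h := hDrec 0 le_rfl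
        rw [show (0 : ℤ) - 1 = -1 from by ring, hDneg] at h
        norm_num at h
        constructor
        · push_cast
          rw [zpow_one]
        · push_cast
          rw [show r ^ (2 : ℤ) = r * r from by rw [zpow_two]]
          linear_combination (r * r - 1) * h - (D 1 * (1 - r)) * hpq - (D 1 * (1 - r)) * hpr
    | succ n ih =>
        obtain ⟨ih1, ih2⟩ := ih
        have hrec' := hDrec ((n : ℤ) + 1) (by positivity)
        rw [show (n : ℤ) + 1 - 1 = n from by ring, show (n : ℤ) + 1 + 1 = (n : ℤ) + 2 from by ring]
          at hrec'
        have k := key_id hq hqp hpq ((n : ℤ) + 1)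
        rw [← hr, show (n : ℤ) + 1 + 2 = (n : ℤ) + 3 from by ring,
            show (n : ℤ) + 1 + 1 = (n : ℤ) + 2 from by ring] at k
        constructor
        · push_cast
          exact ih2
        · push_cast
          rw [show (n : ℤ) + 1 + 1 = (n : ℤ) + 2 from by ring,
              show (n : ℤ) + 1 + 2 = (n : ℤ) + 3 from by ring]
          have key : p * (D ((n : ℤ) + 2) * (1 - r)) = p * (D 0 * (1 - r ^ ((n : ℤ) + 3))) := by
            linear_combination -(1 - r) * hrec' + ih2 - q * ih1 + D 0 * k - D 0 * hpq
          exact mul_left_cancel₀ hp0.ne' key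
  -- D 0 ≤ r ^ (n + 1) for every n
  have hD0le : ∀ n : ℕ, D 0 ≤ r ^ (n + 1) := by
    intro n
    have h1 := (claim n).1
    have hle : D (n : ℤ) ≤ r ^ ((n : ℤ) + 1) := by
      rw [hDm]
      linarith [hL0 (n : ℤ)]
    have hcast : r ^ ((n : ℤ) + 1) = r ^ (n + 1) := by
      rw [show ((n : ℤ) + 1) = ((n + 1 : ℕ) : ℤ) from by push_cast; ring, zpow_natCast]
    have hrn : r ^ (n + 1) ≤ r := by
      calc r ^ (n + 1) ≤ r ^ 1 := pow_le_pow_of_le_one hr0.le hr1.le (by omega)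
        _ = r := pow_one r
    have h2 : D 0 * (1 - r) ≤ r ^ (n + 1) * (1 - r) := by
      calc D 0 * (1 - r) ≤ D 0 * (1 - r ^ ((n : ℤ) + 1)) := by
            rw [hcast]
            apply mul_le_mul_of_nonneg_left _ (hD0 0)
            linarith
        _ = D (n : ℤ) * (1 - r) := h1.symm
        _ ≤ r ^ ((n : ℤ) + 1) * (1 - r) :=
            mul_le_mul_of_nonneg_right hle (by linarith)
        _ = r ^ (n + 1) * (1 - r) := by rw [hcast]
    have := (mul_le_mul_iff_of_pos_right (by linarith : (0 : ℝ) < 1 - r)).1 h2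
    exact this
  -- hence D 0 = 0
  have hD00 : D 0 = 0 := by
    have ht : Filter.Tendsto (fun n : ℕ => r ^ (n + 1)) Filter.atTop (nhds 0) :=
      (tendsto_pow_atTop_nhds_zero_of_lt_one hr0.le hr1).comp (Filter.tendsto_add_atTop_nat 1)
    have : D 0 ≤ 0 := ge_of_tendsto' ht hD0le
    linarith [hD0 0]
  -- hence D vanishes on ℕ, i.e. L n = r^(n+1)
  have hLn : ∀ n : ℕ, L (n : ℤ) = r ^ ((n : ℤ) + 1) := by
    intro n
    have h1 := (claim n).1
    rw [hD00] at h1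
    have : D (n : ℤ) = 0 := by
      have h := h1
      rw [zero_mul] at h
      have hne : (1 - r) ≠ 0 := by linarith
      exact (mul_eq_zero.1 h).resolve_right hne
    have := hDm (n : ℤ) ▸ this
    linarith [this]
  lift z to ℕ using hz
  rw [← hLn z]
  exact hT (z : ℤ)
end

section
/- Let 0 < q < p with p + q = 1. For every n ≥ 1, the attacker success probability P_s(n) = 1 − Σ_{m=0}^{n-1} C(m+n-1, m)(p^n q^m − p^m q^n) tends to 0 as n tends to infinity. -/
lemma choose_le_two_pow' (n k : ℕ) : n.choose k ≤ 2 ^ n := by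
  rcases le_or_gt k n with h | h
  · calc n.choose k ≤ ∑ i ∈ Finset.range (n + 1), n.choose i :=
        Finset.single_le_sum (fun i _ => Nat.zero_le _) (Finset.mem_range.mpr (by omega))
    _ = 2 ^ n := Nat.sum_range_choose n
  · simp [Nat.choose_eq_zero_of_lt h]

/-- For `0 < q < p` with `p + q = 1`, the attacker success probability
`P_s(n) = 1 − Σ_{m=0}^{n-1} C(m+n-1, m)(p^n q^m − p^m q^n)` tends to `0` as `n → ∞`. -/
theorem attacker_success_prob_tendsto_zero (p q : ℝ) (hq : 0 < q) (hqp : q < p)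
    (hpq : p + q = 1) :
    Filter.Tendsto
      (fun n : ℕ =>
        1 - ∑ m ∈ Finset.range n, ((m + n - 1).choose m : ℝ) * (p ^ n * q ^ m - p ^ m * q ^ n))
      Filter.atTop (nhds 0) := by
  have hp : 0 < p := hq.trans hqp
  have hq2 : 2 * q < 1 := by linarith
  have hp2 : 1 < 2 * p := by linarith
  have hq1 : q < 1 := by linarith
  have h4pq0 : 0 ≤ 4 * p * q := by positivity
  have h4pq : 4 * p * q < 1 := by nlinarith [sq_nonneg (p - q)]
  -- the main estimate for `n = k + 1`
  have key : ∀ k : ℕ,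
      0 ≤ 1 - ∑ m ∈ Finset.range (k+1),
          ((m + (k+1) - 1).choose m : ℝ) * (p ^ (k+1) * q ^ m - p ^ m * q ^ (k+1)) ∧
      1 - ∑ m ∈ Finset.range (k+1),
          ((m + (k+1) - 1).choose m : ℝ) * (p ^ (k+1) * q ^ m - p ^ m * q ^ (k+1))
        ≤ (1 / (p - q)) * (4 * p * q) ^ (k+1) := by
    intro k
    set n := k + 1 with hn
    have hcast : ∀ m : ℕ, ((m + n - 1).choose m : ℝ) = ((m + k).choose k : ℝ) := by
      intro m
      have : m + n - 1 = m + k := by omega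
      rw [this, Nat.choose_symm_add]
    have hnormq : ‖q‖ < 1 := by rwa [Real.norm_eq_abs, abs_of_pos hq]
    have hsum : HasSum (fun m : ℕ => ((m + k).choose k : ℝ) * q ^ m)
        (1 / (1 - q) ^ (k + 1)) := hasSum_choose_mul_geometric_of_norm_lt_one k hnormq
    have h1q : 1 - q = p := by linarith
    rw [h1q] at hsum
    have hsummable : Summable (fun m : ℕ => ((m + k).choose k : ℝ) * q ^ m) := hsum.summable
    have hpqne : p - q ≠ 0 := (sub_pos.mpr hqp).ne'
    have hpne : p ≠ 0 := hp.ne'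
    -- split into head + tail
    have hsplit : ∑ m ∈ Finset.range n, ((m + k).choose k : ℝ) * q ^ m
        + ∑' m : ℕ, ((m + n + k).choose k : ℝ) * q ^ (m + n) = 1 / p ^ n := by
      have := Summable.sum_add_tsum_nat_add (f := fun m : ℕ => ((m + k).choose k : ℝ) * q ^ m) n hsummable
      rw [hsum.tsum_eq] at this
      simpa [hn] using this
    set T : ℝ := ∑' m : ℕ, ((m + n + k).choose k : ℝ) * q ^ (m + n) with hT
    have hTnonneg : 0 ≤ T := tsum_nonneg (fun m => by positivity)
    have hpn : p ^ n * (1 / p ^ n) = 1 := by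
      field_simp
    set B : ℝ := ∑ m ∈ Finset.range n, ((m + k).choose k : ℝ) * p ^ m * q ^ n with hB
    have hBnonneg : 0 ≤ B := Finset.sum_nonneg (fun m _ => by positivity)
    -- rewrite the main expression
    have hA : ∑ m ∈ Finset.range n, ((m + n - 1).choose m : ℝ) * (p ^ n * q ^ m - p ^ m * q ^ n)
        = p ^ n * (∑ m ∈ Finset.range n, ((m + k).choose k : ℝ) * q ^ m) - B := by
      rw [Finset.mul_sum, hB, ← Finset.sum_sub_distrib]
      exact Finset.sum_congr rfl fun m _ => by rw [hcast m]; ring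
    have hGsum : ∑ m ∈ Finset.range n, ((m + k).choose k : ℝ) * q ^ m = 1 / p ^ n - T := by
      linarith [hsplit]
    have hexpr : 1 - ∑ m ∈ Finset.range n,
        ((m + n - 1).choose m : ℝ) * (p ^ n * q ^ m - p ^ m * q ^ n) = p ^ n * T + B := by
      rw [hA, hGsum, mul_sub, hpn]; ring
    constructor
    · rw [hexpr]; positivity
    · rw [hexpr]
      -- bound T
      have hgsummable : Summable (fun m : ℕ => (2:ℝ) ^ (m + n + k) * q ^ (m + n)) := by
        have : (fun m : ℕ => (2:ℝ) ^ (m + n + k) * q ^ (m + n))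
            = fun m : ℕ => ((2:ℝ) ^ (n + k) * q ^ n) * (2 * q) ^ m := by
          funext m; rw [mul_pow]; ring
        rw [this]
        exact (summable_geometric_of_lt_one (by positivity) hq2).mul_left _
      have hTle : T ≤ 2 ^ (n + k) * q ^ n / (1 - 2 * q) := by
        have hfs : Summable (fun m : ℕ => ((m + n + k).choose k : ℝ) * q ^ (m + n)) := by
          have := (summable_nat_add_iff (f := fun m : ℕ => ((m + k).choose k : ℝ) * q ^ m) n).2
            hsummable
          simpa [add_right_comm] using this
        have h1 : T ≤ ∑' m : ℕ, (2:ℝ) ^ (m + n + k) * q ^ (m + n) := by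
          apply Summable.tsum_le_tsum _ hfs hgsummable
          intro m
          have := choose_le_two_pow' (m + n + k) k
          have h2 : ((m + n + k).choose k : ℝ) ≤ 2 ^ (m + n + k) := by exact_mod_cast this
          have h3 : (0:ℝ) ≤ q ^ (m + n) := by positivity
          exact mul_le_mul_of_nonneg_right h2 h3
        have h2 : ∑' m : ℕ, (2:ℝ) ^ (m + n + k) * q ^ (m + n)
            = 2 ^ (n + k) * q ^ n / (1 - 2 * q) := by
          have heq : (fun m : ℕ => (2:ℝ) ^ (m + n + k) * q ^ (m + n))
              = fun m : ℕ => ((2:ℝ) ^ (n + k) * q ^ n) * (2 * q) ^ m := by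
            funext m; rw [mul_pow]; ring
          rw [heq, tsum_mul_left, tsum_geometric_of_lt_one (by positivity) hq2]
          field_simp
        linarith [h1, h2.le, h2.ge]
      -- bound B
      have hBle : B ≤ 2 ^ k * q ^ n * ((2 * p) ^ n / (2 * p - 1)) := by
        have h1 : B ≤ ∑ m ∈ Finset.range n, (2:ℝ) ^ (m + k) * p ^ m * q ^ n := by
          apply Finset.sum_le_sum
          intro m _
          have := choose_le_two_pow' (m + k) k
          have h2 : ((m + k).choose k : ℝ) ≤ 2 ^ (m + k) := by exact_mod_cast this
          have h3 : (0:ℝ) ≤ p ^ m * q ^ n := by positivity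
          nlinarith
        have h2 : ∑ m ∈ Finset.range n, (2:ℝ) ^ (m + k) * p ^ m * q ^ n
            = 2 ^ k * q ^ n * ∑ m ∈ Finset.range n, (2 * p) ^ m := by
          rw [Finset.mul_sum]
          apply Finset.sum_congr rfl
          intro m _
          rw [pow_add, mul_pow]; ring
        have h3 : ∑ m ∈ Finset.range n, (2 * p) ^ m = ((2 * p) ^ n - 1) / (2 * p - 1) :=
          geom_sum_eq (by linarith) n
        have h4 : ((2 * p) ^ n - 1) / (2 * p - 1) ≤ (2 * p) ^ n / (2 * p - 1) := by
          apply div_le_div_of_nonneg_right ?_ (by linarith) |>.trans_eq rfl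
          · linarith
        calc B ≤ 2 ^ k * q ^ n * (((2 * p) ^ n - 1) / (2 * p - 1)) := by
              rw [← h3, ← h2]; exact h1
          _ ≤ 2 ^ k * q ^ n * ((2 * p) ^ n / (2 * p - 1)) := by
              apply mul_le_mul_of_nonneg_left h4 (by positivity)
      -- combine
      have hc1 : p ^ n * T ≤ p ^ n * (2 ^ (n + k) * q ^ n / (1 - 2 * q)) :=
        mul_le_mul_of_nonneg_left hTle (by positivity)
      have hkey1 : p ^ n * (2 ^ (n + k) * q ^ n / (1 - 2 * q))
          = (4 * p * q) ^ n / (2 * (p - q)) := by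
        have hnk : n + k = 2 * n - 1 := by omega
        have : (2:ℝ) ^ (n + k) = 4 ^ n / 2 := by
          rw [hnk, show 2 * n - 1 = n + k from by omega, pow_add]
          rw [show (4:ℝ) ^ n = 2 ^ (2 * n) from by rw [pow_mul]; norm_num]
          rw [show 2 * n = (n + k) + 1 from by omega, pow_succ]
          ring
        rw [this, show (4 * p * q) ^ n = 4 ^ n * p ^ n * q ^ n from by
          rw [mul_pow, mul_pow]]
        have : 1 - 2 * q = p - q := by linarith
        rw [this]
        field_simp
      have hkey2 : 2 ^ k * q ^ n * ((2 * p) ^ n / (2 * p - 1))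
          = (4 * p * q) ^ n / (2 * (p - q)) := by
        have h2k : (2:ℝ) ^ k = 2 ^ n / 2 := by
          rw [hn, pow_succ]; field_simp
        rw [h2k, show ((2:ℝ) * p) ^ n = 2 ^ n * p ^ n from mul_pow 2 p n,
          show (4 * p * q) ^ n = 4 ^ n * p ^ n * q ^ n from by rw [mul_pow, mul_pow],
          show (4:ℝ) ^ n = 2 ^ n * 2 ^ n from by rw [← mul_pow]; norm_num,
          show (2:ℝ) * p - 1 = p - q from by linarith]
        field_simp
      have hfinal : p ^ n * T + B ≤ (4 * p * q) ^ n / (2 * (p - q)) + (4 * p * q) ^ n / (2 * (p - q)) := by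
        have := hBle.trans_eq hkey2
        linarith [hc1.trans_eq hkey1]
      calc p ^ n * T + B ≤ (4*p*q)^n / (2*(p-q)) + (4*p*q)^n / (2*(p-q)) := hfinal
        _ = (1 / (p - q)) * (4 * p * q) ^ n := by
            rw [← add_div,
              show (4 * p * q) ^ n + (4 * p * q) ^ n = 2 * (4 * p * q) ^ n from by ring,
              mul_div_mul_left _ _ (two_ne_zero), one_div, inv_mul_eq_div]
  -- squeeze
  have hlim : Filter.Tendsto (fun n : ℕ => (1 / (p - q)) * (4 * p * q) ^ n)
      Filter.atTop (nhds 0) := by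
    have := (tendsto_pow_atTop_nhds_zero_of_lt_one h4pq0 h4pq).const_mul (1 / (p - q))
    simpa using this
  apply tendsto_of_tendsto_of_tendsto_of_le_of_le' tendsto_const_nhds hlim
  · filter_upwards [Filter.eventually_ge_atTop 1] with n hn
    obtain ⟨k, rfl⟩ : ∃ k, n = k + 1 := ⟨n - 1, by omega⟩
    exact (key k).1
  · filter_upwards [Filter.eventually_ge_atTop 1] with n hn
    obtain ⟨k, rfl⟩ : ∃ k, n = k + 1 := ⟨n - 1, by omega⟩
    exact (key k).2
end

section
/- Let 0 < q < p with p + q = 1 and n ≥ 1. The attacker success probability P_s(n) = 1 − Σ_{m=0}^{n-1} C(m+n-1, m)(p^n q^m − p^m q^n) is monotonically nonincreasing in n. -/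
open Finset

lemma key_identity (p q : ℝ) (N : ℕ) :
    ∑ m ∈ range (N + 2), ((m + N + 1).choose m : ℝ) * (p ^ (N + 2) * q ^ m)
      = p * ∑ m ∈ range (N + 1), ((m + N).choose m : ℝ) * (p ^ (N + 1) * q ^ m)
        + q * ∑ m ∈ range (N + 2), ((m + N + 1).choose m : ℝ) * (p ^ (N + 2) * q ^ m)
        + p ^ (N + 2) * q ^ (N + 1) *
            (((2 * N + 1).choose (N + 1) : ℝ) - q * ((2 * N + 2).choose (N + 1) : ℝ)) := by
  have hpascal : ∀ k : ℕ, ((k + 1 + N + 1).choose (k + 1) : ℝ)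
      = ((k + 1 + N).choose (k + 1) : ℝ) + ((k + N + 1).choose k : ℝ) := by
    intro k
    rw [show k + 1 + N + 1 = (k + N + 1) + 1 by omega, Nat.choose_succ_succ,
        show k + 1 + N = k + N + 1 by omega]
    push_cast
    ring
  have h1 : ∑ m ∈ range (N + 2), ((m + N + 1).choose m : ℝ) * (p ^ (N + 2) * q ^ m)
      = ∑ m ∈ range (N + 2), ((m + N).choose m : ℝ) * (p ^ (N + 2) * q ^ m)
        + ∑ k ∈ range (N + 1), ((k + N + 1).choose k : ℝ) * (p ^ (N + 2) * q ^ (k + 1)) := by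
    rw [Finset.sum_range_succ' (fun m => ((m + N + 1).choose m : ℝ) * (p ^ (N + 2) * q ^ m)),
        Finset.sum_range_succ' (fun m => ((m + N).choose m : ℝ) * (p ^ (N + 2) * q ^ m))]
    simp only [hpascal]
    simp [Nat.choose_zero_right, add_mul, Finset.sum_add_distrib]
    ring
  have h2 : ∑ m ∈ range (N + 2), ((m + N).choose m : ℝ) * (p ^ (N + 2) * q ^ m)
      = ∑ m ∈ range (N + 1), ((m + N).choose m : ℝ) * (p ^ (N + 2) * q ^ m)
        + ((2 * N + 1).choose (N + 1) : ℝ) * (p ^ (N + 2) * q ^ (N + 1)) := by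
    rw [Finset.sum_range_succ, show N + 1 + N = 2 * N + 1 by omega]
  have h3 : ∑ k ∈ range (N + 2), ((k + N + 1).choose k : ℝ) * (p ^ (N + 2) * q ^ (k + 1))
      = ∑ k ∈ range (N + 1), ((k + N + 1).choose k : ℝ) * (p ^ (N + 2) * q ^ (k + 1))
        + ((2 * N + 2).choose (N + 1) : ℝ) * (p ^ (N + 2) * q ^ (N + 2)) := by
    rw [Finset.sum_range_succ, show N + 1 + N + 1 = 2 * N + 2 by omega]
  have h4 : q * ∑ m ∈ range (N + 2), ((m + N + 1).choose m : ℝ) * (p ^ (N + 2) * q ^ m)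
      = ∑ k ∈ range (N + 2), ((k + N + 1).choose k : ℝ) * (p ^ (N + 2) * q ^ (k + 1)) := by
    rw [Finset.mul_sum]
    exact Finset.sum_congr rfl fun m _ => by ring
  have h5 : p * ∑ m ∈ range (N + 1), ((m + N).choose m : ℝ) * (p ^ (N + 1) * q ^ m)
      = ∑ m ∈ range (N + 1), ((m + N).choose m : ℝ) * (p ^ (N + 2) * q ^ m) := by
    rw [Finset.mul_sum]
    exact Finset.sum_congr rfl fun m _ => by ring
  linear_combination h1 + h2 - h3 - h4 - h5

lemma diff_eq (p q : ℝ) (hp : p ≠ 0) (hpq : p + q = 1) (N : ℕ) :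
    ∑ m ∈ range (N + 2), ((m + N + 1).choose m : ℝ) * (p ^ (N + 2) * q ^ m)
      - ∑ m ∈ range (N + 1), ((m + N).choose m : ℝ) * (p ^ (N + 1) * q ^ m)
      = ((2 * N + 1).choose (N + 1) : ℝ) * (p ^ (N + 1) * q ^ (N + 1)) * (p - q) := by
  have hkey := key_identity p q N
  have hc : ((2 * N + 2).choose (N + 1) : ℝ) = 2 * ((2 * N + 1).choose (N + 1) : ℝ) := by
    rw [show 2 * N + 2 = (2 * N + 1) + 1 by omega, Nat.choose_succ_succ,
        show (2 * N + 1).choose N = (2 * N + 1).choose (N + 1) from by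
          rw [← Nat.choose_symm (by omega : N + 1 ≤ 2 * N + 1),
              show 2 * N + 1 - (N + 1) = N by omega]]
    push_cast
    ring
  apply mul_left_cancel₀ hp
  rw [mul_sub]
  linear_combination hkey
    + (∑ m ∈ range (N + 2), ((m + N + 1).choose m : ℝ) * (p ^ (N + 2) * q ^ m)) * hpq
    - (p ^ (N + 2) * q ^ (N + 1) * q) * hc
    - (p ^ (N + 2) * q ^ (N + 1) * ((2 * N + 1).choose (N + 1) : ℝ)) * hpq

/-- For `0 < q < p` with `p + q = 1`, the attacker success probability
`P_s(n) = 1 − Σ_{m=0}^{n-1} C(m+n-1, m)(p^n q^m − p^m q^n)` is monotonically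
nonincreasing in `n` for `n ≥ 1`. -/
theorem attacker_success_prob_antitone (p q : ℝ) (hq : 0 < q) (hqp : q < p) (hpq : p + q = 1)
    (n : ℕ) (hn : 1 ≤ n) :
    1 - ∑ m ∈ Finset.range (n + 1),
        ((m + (n + 1) - 1).choose m : ℝ) * (p ^ (n + 1) * q ^ m - p ^ m * q ^ (n + 1)) ≤
    1 - ∑ m ∈ Finset.range n,
        ((m + n - 1).choose m : ℝ) * (p ^ n * q ^ m - p ^ m * q ^ n) := by
  obtain ⟨N, rfl⟩ : ∃ N, n = N + 1 := ⟨n - 1, by omega⟩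
  have hp0 : (0 : ℝ) < p := hq.trans hqp
  apply sub_le_sub_left
  have e1 : ∀ m : ℕ, m + (N + 1 + 1) - 1 = m + N + 1 := fun m => by omega
  have e2 : ∀ m : ℕ, m + (N + 1) - 1 = m + N := fun m => by omega
  simp only [e1, e2]
  have hs1 : ∑ m ∈ range (N + 1),
      ((m + N).choose m : ℝ) * (p ^ (N + 1) * q ^ m - p ^ m * q ^ (N + 1))
      = ∑ m ∈ range (N + 1), ((m + N).choose m : ℝ) * (p ^ (N + 1) * q ^ m)
        - ∑ m ∈ range (N + 1), ((m + N).choose m : ℝ) * (q ^ (N + 1) * p ^ m) := by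
    rw [← Finset.sum_sub_distrib]
    exact Finset.sum_congr rfl fun m _ => by ring
  have hs2 : ∑ m ∈ range (N + 2),
      ((m + N + 1).choose m : ℝ) * (p ^ (N + 2) * q ^ m - p ^ m * q ^ (N + 2))
      = ∑ m ∈ range (N + 2), ((m + N + 1).choose m : ℝ) * (p ^ (N + 2) * q ^ m)
        - ∑ m ∈ range (N + 2), ((m + N + 1).choose m : ℝ) * (q ^ (N + 2) * p ^ m) := by
    rw [← Finset.sum_sub_distrib]
    exact Finset.sum_congr rfl fun m _ => by ring
  rw [hs1, hs2]
  have d1 := diff_eq p q hp0.ne' hpq N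
  have d2 := diff_eq q p hq.ne' (by linarith) N
  have d2' : ∑ m ∈ range (N + 2), ((m + N + 1).choose m : ℝ) * (q ^ (N + 2) * p ^ m)
      - ∑ m ∈ range (N + 1), ((m + N).choose m : ℝ) * (q ^ (N + 1) * p ^ m)
      = -(((2 * N + 1).choose (N + 1) : ℝ) * (p ^ (N + 1) * q ^ (N + 1)) * (p - q)) := by
    rw [d2]; ring
  have hpos : 0 ≤ ((2 * N + 1).choose (N + 1) : ℝ) * (p ^ (N + 1) * q ^ (N + 1)) * (p - q) :=
    mul_nonneg (mul_nonneg (Nat.cast_nonneg _)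
      (by positivity)) (by linarith)
  linarith
end

section
/- Let 0 < q < p with p + q = 1 and n ≥ 1. Then P_s(n) = Σ_{m=0}^{∞} C(m+n-1, m) p^n q^m · min(1, (q/p)^{n-m}) when interpreted as Σ_{m=0}^{n-1} C(m+n-1,m) p^n q^m (q/p)^{n-m} + Σ_{m=n}^{∞} C(m+n-1,m) p^n q^m, and this equals 1 − Σ_{m=0}^{n-1} C(m+n-1,m)(p^n q^m − p^m q^n). -/
/-- Derivation of equation (14) from equation (13): for `0 < q < p` with `p + q = 1`
and `n ≥ 1`, the negative-binomial-weighted sum of catch-up probabilities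
(`(q/p)^(n-m)` for `m < n`, and `1` for `m ≥ n`) equals the closed form
`1 − Σ_{m=0}^{n-1} C(m+n-1,m)(p^n q^m − p^m q^n)`. -/
theorem attacker_success_prob_split_sum (p q : ℝ) (hq : 0 < q) (hqp : q < p) (hpq : p + q = 1)
    (n : ℕ) (hn : 1 ≤ n) :
    (∑ m ∈ Finset.range n,
        ((m + n - 1).choose m : ℝ) * p ^ n * q ^ m * (q / p) ^ (n - m)) +
      (∑' m : ℕ, (((m + n) + n - 1).choose (m + n) : ℝ) * p ^ n * q ^ (m + n)) =
    1 - ∑ m ∈ Finset.range n,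
        ((m + n - 1).choose m : ℝ) * (p ^ n * q ^ m - p ^ m * q ^ n) := by
  have hp : 0 < p := hq.trans hqp
  have hq1 : q < 1 := by linarith
  have hqn : ‖q‖ < 1 := by rw [Real.norm_eq_abs, abs_of_pos hq]; exact hq1
  set f : ℕ → ℝ := fun m => ((m + n - 1).choose m : ℝ) * p ^ n * q ^ m with hf
  -- total sum equals 1
  have h1 : HasSum f 1 := by
    have h := hasSum_choose_mul_geometric_of_norm_lt_one (𝕜 := ℝ) (n - 1) hqn
    have hc : ∀ m : ℕ, f m = p ^ n * (((m + (n - 1)).choose (n - 1) : ℝ) * q ^ m) := by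
      intro m
      have : (m + n - 1).choose m = (m + (n - 1)).choose (n - 1) := by
        rw [show m + n - 1 = m + (n - 1) by omega, Nat.choose_symm_add]
      simp only [hf, this]; ring
    have h2 := h.mul_left (p ^ n)
    have : p ^ n * (1 / (1 - q) ^ (n - 1 + 1)) = 1 := by
      rw [show 1 - q = p by linarith, show n - 1 + 1 = n by omega]
      field_simp
    rw [this] at h2
    show HasSum f 1; rw [funext hc]; exact h2
  -- tail sum
  have htail : HasSum (fun m => f (m + n)) (1 - ∑ m ∈ Finset.range n, f m) :=
    (hasSum_nat_add_iff' n).mpr h1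
  have htsum : (∑' m : ℕ, (((m + n) + n - 1).choose (m + n) : ℝ) * p ^ n * q ^ (m + n))
      = 1 - ∑ m ∈ Finset.range n, f m := htail.tsum_eq
  rw [htsum]
  -- first sum: term equals C * p^m q^n
  have hfirst : ∀ m ∈ Finset.range n,
      ((m + n - 1).choose m : ℝ) * p ^ n * q ^ m * (q / p) ^ (n - m)
        = ((m + n - 1).choose m : ℝ) * (p ^ m * q ^ n) := by
    intro m hm
    rw [Finset.mem_range] at hm
    have hmn : m + (n - m) = n := by omega
    rw [div_pow, ← hmn, pow_add p, pow_add q]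
    field_simp
    simp only [Nat.add_sub_cancel_left]
  rw [Finset.sum_congr rfl hfirst]
  simp only [hf]
  have : ∑ m ∈ Finset.range n, ((m + n - 1).choose m : ℝ) * (p ^ n * q ^ m - p ^ m * q ^ n)
      = (∑ m ∈ Finset.range n, ((m + n - 1).choose m : ℝ) * p ^ n * q ^ m)
        - ∑ m ∈ Finset.range n, ((m + n - 1).choose m : ℝ) * (p ^ m * q ^ n) := by
    rw [← Finset.sum_sub_distrib]
    exact Finset.sum_congr rfl (fun m _ => by ring)
  rw [this]
  ring
end

section
/- Let 0 < q < 1/2 and p = 1 − q. Then the map q ↦ P_s(n) = 1 − Σ_{m=0}^{n-1} C(m+n-1, m)((1−q)^n q^m − (1−q)^m q^n) is strictly increasing in q on (0, 1/2) for each fixed n ≥ 1. -/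
/-- Telescoping auxiliary function. -/
private def tf (k : ℕ) (x y : ℝ) : ℕ → ℝ
  | 0 => 0
  | (j+1) => -((k:ℝ)+1) * ((j + k + 1).choose j : ℝ) * x^k * y^j

private lemma nat_key (j k : ℕ) :
    (j+1) * ((j+k+1).choose (j+1)) = (k+1) * ((j+k+1).choose j) := by
  have a1 : (j+k+1) * ((j+k).choose j) = ((j+k+1).choose (j+1)) * (j+1) :=
    Nat.add_one_mul_choose_eq (j+k) j
  have a2 : (j+k+1) * ((j+k).choose k) = ((j+k+1).choose (k+1)) * (k+1) :=
    Nat.add_one_mul_choose_eq (j+k) k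
  have s1 : (j+k).choose j = (j+k).choose k := Nat.choose_symm_add
  have s2 : (j+k+1).choose (k+1) = (j+k+1).choose j := by
    have : (j+k+1).choose ((j+k+1) - j) = (j+k+1).choose j :=
      Nat.choose_symm (by omega)
    simpa [show j+k+1-j = k+1 from by omega] using this
  rw [s1] at a1
  rw [s2] at a2
  calc (j+1) * ((j+k+1).choose (j+1)) = ((j+k+1).choose (j+1)) * (j+1) := Nat.mul_comm _ _
    _ = (j+k+1) * ((j+k).choose k) := a1.symm
    _ = ((j+k+1).choose j) * (k+1) := a2
    _ = (k+1) * ((j+k+1).choose j) := Nat.mul_comm _ _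

private lemma tele (k : ℕ) (x y : ℝ) (hxy : x + y = 1) :
    ∑ m ∈ Finset.range (k+1), ((m + k).choose m : ℝ) *
      ((m : ℝ) * x^(k+1) * y^(m-1) - ((k:ℝ)+1) * x^k * y^m)
    = -((k:ℝ)+1) * ((2*k+1).choose k : ℝ) * x^k * y^k := by
  have hx : x = 1 - y := by linarith
  subst hx
  have key : ∀ m ∈ Finset.range (k+1),
      ((m + k).choose m : ℝ) * ((m : ℝ) * (1-y)^(k+1) * y^(m-1) - ((k:ℝ)+1) * (1-y)^k * y^m)
        = tf k (1-y) y (m+1) - tf k (1-y) y m := by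
    intro m _
    match m with
    | 0 =>
      simp only [tf, Nat.choose_zero_right]
      push_cast
      ring
    | (j+1) =>
      simp only [tf, Nat.add_sub_cancel,
        show j+1+k = j+k+1 from by omega, show j+1+k+1 = j+k+1+1 from by omega]
      have h1 : ((j:ℝ)+1) * ((j+k+1).choose (j+1) : ℝ)
          = ((k:ℝ)+1) * ((j+k+1).choose j : ℝ) := by
        exact_mod_cast congrArg (Nat.cast (R := ℝ)) (nat_key j k)
      have h2 : ((j+k+1+1).choose (j+1) : ℝ)
          = ((j+k+1).choose j : ℝ) + ((j+k+1).choose (j+1) : ℝ) := by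
        exact_mod_cast congrArg (Nat.cast (R := ℝ)) (Nat.choose_succ_succ (j+k+1) j)
      push_cast
      linear_combination ((1-y)^(k+1) * y^j) * h1
        + (((k:ℝ)+1) * (1-y)^k * y^(j+1)) * h2
  rw [Finset.sum_congr rfl key, Finset.sum_range_sub]
  simp only [tf, show k+k+1 = 2*k+1 from by omega]
  ring

/-- For each fixed `n ≥ 1`, the attacker success probability
`q ↦ 1 − Σ_{m=0}^{n-1} C(m+n-1, m)((1−q)^n q^m − (1−q)^m q^n)`
is strictly increasing in the attacker power `q` on `(0, 1/2)`. -/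
theorem attacker_success_prob_strictMonoOn (n : ℕ) (hn : 1 ≤ n) :
    StrictMonoOn
      (fun q : ℝ =>
        1 - ∑ m ∈ Finset.range n,
          ((m + n - 1).choose m : ℝ) * ((1 - q) ^ n * q ^ m - (1 - q) ^ m * q ^ n))
      (Set.Ioo (0 : ℝ) (1 / 2)) := by
  obtain ⟨k, rfl⟩ : ∃ k, n = k + 1 := ⟨n - 1, by omega⟩
  apply strictMonoOn_of_deriv_pos (convex_Ioo 0 (1/2))
  · apply Continuous.continuousOn
    fun_prop
  · intro q hq
    rw [interior_Ioo] at hq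
    obtain ⟨hq0, hq1⟩ := hq
    have hp : HasDerivAt (fun q : ℝ => 1 - q) (-1) q := by
      simpa using (hasDerivAt_const q (1:ℝ)).fun_sub (hasDerivAt_id q)
    have hsum : HasDerivAt
        (fun q : ℝ => ∑ m ∈ Finset.range (k+1),
          ((m + (k+1) - 1).choose m : ℝ) * ((1 - q) ^ (k+1) * q ^ m - (1 - q) ^ m * q ^ (k+1)))
        (∑ m ∈ Finset.range (k+1),
          ((m + (k+1) - 1).choose m : ℝ) *
            (((↑(k+1) * (1-q)^(k+1-1) * (-1)) * q^m + (1-q)^(k+1) * (↑m * q^(m-1)))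
             - ((↑m * (1-q)^(m-1) * (-1)) * q^(k+1) + (1-q)^m * (↑(k+1) * q^(k+1-1))))) q := by
      apply HasDerivAt.fun_sum
      intro m _
      exact (((hp.pow (k+1)).mul (hasDerivAt_pow m q)).sub
        ((hp.pow m).mul (hasDerivAt_pow (k+1) q))).const_mul _
    have hD := (hasDerivAt_const q (1:ℝ)).fun_sub hsum
    rw [hD.deriv]
    have t1 := tele k (1-q) q (by ring)
    have t2 := tele k q (1-q) (by ring)
    have key : (∑ m ∈ Finset.range (k+1),
          ((m + (k+1) - 1).choose m : ℝ) *
            (((↑(k+1) * (1-q)^(k+1-1) * (-1)) * q^m + (1-q)^(k+1) * (↑m * q^(m-1)))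
             - ((↑m * (1-q)^(m-1) * (-1)) * q^(k+1) + (1-q)^m * (↑(k+1) * q^(k+1-1)))))
        = -(2 * ((k:ℝ)+1) * ((2*k+1).choose k : ℝ) * ((1-q)^k * q^k)) := by
      have split : ∀ m ∈ Finset.range (k+1),
          ((m + (k+1) - 1).choose m : ℝ) *
            (((↑(k+1) * (1-q)^(k+1-1) * (-1)) * q^m + (1-q)^(k+1) * (↑m * q^(m-1)))
             - ((↑m * (1-q)^(m-1) * (-1)) * q^(k+1) + (1-q)^m * (↑(k+1) * q^(k+1-1))))
          = ((m + k).choose m : ℝ) *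
              ((m : ℝ) * (1-q)^(k+1) * q^(m-1) - ((k:ℝ)+1) * (1-q)^k * q^m)
            + ((m + k).choose m : ℝ) *
              ((m : ℝ) * q^(k+1) * (1-q)^(m-1) - ((k:ℝ)+1) * q^k * (1-q)^m) := by
        intro m _
        rw [show m + (k+1) - 1 = m + k from by omega]
        simp only [Nat.add_sub_cancel]
        push_cast
        ring
      rw [Finset.sum_congr rfl split, Finset.sum_add_distrib, t1, t2]
      ring
    rw [key]
    have hC : (0:ℝ) < ((2*k+1).choose k : ℝ) := by
      exact_mod_cast Nat.choose_pos (by omega)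
    have h1q : (0:ℝ) < 1 - q := by linarith
    have : (0:ℝ) < 2 * ((k:ℝ)+1) * ((2*k+1).choose k : ℝ) * ((1-q)^k * q^k) := by positivity
    linarith
end
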